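/- Assume that for each pair (d,h) ∈ D × H there is at most one contract x ∈ 𝐗 with x_D = d and x_H = h (the matching model without contracts), and that every hospital's preference is substitutable. Then the hospital-optimal rule φ̲ is not obviously manipulable: no doctor has an obvious manipulation of φ̲ at any preference. -/

import Mathlib

set_option linter.unusedSectionVars false

namespace Matching

open Finset

/-- A many-to-one matching market with contracts: each contract `x` involves exactly one
doctor `xD x` and one hospital `xH x`; each hospital `h` has a fixed antisymmetric,
transitive and complete preference `prH h`, modelled as a linear order on sets of
contracts (only its comparisons between allocations of contracts involving `h` matter). -/
structure Market (D H X : Type*) where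
  xD : X → D
  xH : X → H
  prH : H → LinearOrder (Finset X)

/-- A doctor's preference: an antisymmetric, transitive and complete preference, modelled
as a linear order on sets of contracts (only comparisons between `∅` and singletons of
contracts involving the doctor matter). -/
abbrev Pref (X : Type*) := LinearOrder (Finset X)

/-- A profile of doctors' preferences. -/
abbrev Profile (D X : Type*) := D → Pref X

variable {D H X : Type*}
variable [DecidableEq D] [DecidableEq H] [DecidableEq X] [Fintype D] [Fintype H] [Fintype X]

/-- `Y_d` : the contracts in `Y` involving doctor `d`. -/
def docPart (M : Market D H X) (Y : Finset X) (d : D) : Finset X :=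
  Y.filter fun x => M.xD x = d

/-- `Y_h` : the contracts in `Y` involving hospital `h`. -/
def hospPart (M : Market D H X) (Y : Finset X) (h : H) : Finset X :=
  Y.filter fun x => M.xH x = h

/-- An allocation: distinct contracts involve distinct doctors. -/
def IsAllocation (M : Market D H X) (Z : Finset X) : Prop :=
  ∀ x ∈ Z, ∀ y ∈ Z, M.xD x = M.xD y → x = y

/-- `A(Y)` : the allocations contained in `Y`. -/
def allocs (M : Market D H X) (Y : Finset X) : Finset (Finset X) :=
  Y.powerset.filter fun Z => ∀ x ∈ Z, ∀ y ∈ Z, M.xD x = M.xD y → x = y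

lemma empty_mem_allocs (M : Market D H X) (Y : Finset X) : ∅ ∈ allocs M Y := by
  simp [allocs]

/-- The best allocation contained in `Y` according to the linear order `pr`. -/
def bestAlloc (M : Market D H X) (pr : Pref X) (Y : Finset X) : Finset X :=
  @Finset.max' _ pr (allocs M Y) ⟨∅, empty_mem_allocs M Y⟩

/-- `C_h(Y)` : hospital `h`'s choice set from `Y` (the `≻_h`-maximum of `A(Y_h)`). -/
def Ch (M : Market D H X) (h : H) (Y : Finset X) : Finset X :=
  bestAlloc M (M.prH h) (hospPart M Y h)

/-- `C_d(P_d, Y)` : doctor `d`'s choice set from `Y` (the `P_d`-maximum of `A(Y_d)`). -/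
def Cd (M : Market D H X) (Pd : Pref X) (d : D) (Y : Finset X) : Finset X :=
  bestAlloc M Pd (docPart M Y d)

/-- `C_H(Y) = ∪_{h ∈ H} C_h(Y)`. -/
def CH (M : Market D H X) (Y : Finset X) : Finset X :=
  univ.biUnion fun h => Ch M h Y

/-- `C_D(Y) = ∪_{d ∈ D} C_d(Y)`. -/
def CD (M : Market D H X) (P : Profile D X) (Y : Finset X) : Finset X :=
  univ.biUnion fun d => Cd M (P d) d Y

/-- Substitutability of hospital `h`'s preference: `x ∈ C_h(W)` and `x ∈ Y_h ⊆ W_h`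
imply `x ∈ C_h(Y)`. -/
def Substitutable (M : Market D H X) (h : H) : Prop :=
  ∀ W Y : Finset X, hospPart M Y h ⊆ hospPart M W h →
    ∀ x ∈ hospPart M Y h, x ∈ Ch M h W → x ∈ Ch M h Y

/-- The sets `X^t` of still-available contracts in the doctor-proposing deferred
acceptance algorithm (0-based: index `t` corresponds to iteration `t+1`). -/
def DDAsets (M : Market D H X) (P : Profile D X) : ℕ → Finset X
  | 0 => univ
  | t + 1 =>
      DDAsets M P t \ (CD M P (DDAsets M P t) \ CH M (CD M P (DDAsets M P t)))

/-- `O^t` : the offers made by the doctors at iteration `t` of D-DA (0-based). -/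
def offers (M : Market D H X) (P : Profile D X) (t : ℕ) : Finset X :=
  CD M P (DDAsets M P t)

/-- `O_A^t = ∪_{k ≤ t} O^k` : the accumulated offers up to iteration `t` (0-based). -/
def accOffers (M : Market D H X) (P : Profile D X) (t : ℕ) : Finset X :=
  (Finset.range (t + 1)).biUnion fun k => offers M P k

/-- D-DA has stopped at iteration `t`: all offers are accepted. -/
def DDAstopped (M : Market D H X) (P : Profile D X) (t : ℕ) : Prop :=
  CH M (offers M P t) = offers M P t

/-- The (0-based) last iteration of D-DA, i.e. `T - 1` where `T` is the number of
iterations of D-DA. -/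
noncomputable def DDAlast (M : Market D H X) (P : Profile D X) : ℕ :=
  sInf {t | DDAstopped M P t}

/-- The output of D-DA (the algorithm provably stops by iteration `Fintype.card X`,
and once stopped the offer sets stay constant). -/
def DDAoutput (M : Market D H X) (P : Profile D X) : Finset X :=
  CH M (offers M P (Fintype.card X))

/-- The doctor-optimal rule `φ̄`, giving doctor `d`'s outcome `φ̄_d(P)` (an element of
`A(𝐗_d)`, i.e. `∅` or a singleton). -/
def docOpt (M : Market D H X) (P : Profile D X) (d : D) : Finset X :=
  docPart M (DDAoutput M P) d

/-- The sets `X^t` of still-available contracts in the hospital-proposing deferred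
acceptance algorithm (0-based). -/
def HDAsets (M : Market D H X) (P : Profile D X) : ℕ → Finset X
  | 0 => univ
  | t + 1 =>
      HDAsets M P t \ (CH M (HDAsets M P t) \ CD M P (CH M (HDAsets M P t)))

/-- The offers made by the hospitals at iteration `t` of H-DA (0-based). -/
def hOffers (M : Market D H X) (P : Profile D X) (t : ℕ) : Finset X :=
  CH M (HDAsets M P t)

/-- The output of H-DA. -/
def HDAoutput (M : Market D H X) (P : Profile D X) : Finset X :=
  CD M P (hOffers M P (Fintype.card X))

/-- The hospital-optimal rule `φ̲`, giving doctor `d`'s outcome `φ̲_d(P)`. -/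
def hospOpt (M : Market D H X) (P : Profile D X) (d : D) : Finset X :=
  docPart M (HDAoutput M P) d

/-- The option set `O^φ(P_d)` left open by `P_d` at the rule `φ`. -/
def optionSet (rule : Profile D X → D → Finset X) (d : D) (Pd : Pref X) :
    Set (Finset X) :=
  {S | ∃ P : Profile D X, P d = Pd ∧ S = rule P d}

open scoped Classical in
/-- `W_d(pr, S)` : the `pr`-worst element of the (finite) set `S` of outcomes. -/
noncomputable def worstIn (pr : Pref X) (S : Set (Finset X)) : Finset X :=
  if h : S.Nonempty then
    @Finset.min' _ pr (Set.toFinite S).toFinset ((Set.Finite.toFinset_nonempty _).mpr h)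
  else ∅

open scoped Classical in
/-- The `pr`-best element of the (finite) set `S` of outcomes. -/
noncomputable def bestIn (pr : Pref X) (S : Set (Finset X)) : Finset X :=
  if h : S.Nonempty then
    @Finset.max' _ pr (Set.toFinite S).toFinset ((Set.Finite.toFinset_nonempty _).mpr h)
  else ∅

/-- `P'_d` is a manipulation of the rule at `P_d` : for some subprofile of the other
doctors, reporting `P'_d` gives a strictly `P_d`-better outcome than truth-telling. -/
def IsManip (rule : Profile D X → D → Finset X) (d : D) (Pd P'd : Pref X) : Prop :=
  ∃ P : Profile D X, P d = Pd ∧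
    Pd.lt (rule P d) (rule (Function.update P d P'd) d)

/-- `P'_d` is an obvious manipulation of the rule at `P_d`. -/
def IsObviousManip (rule : Profile D X → D → Finset X) (d : D) (Pd P'd : Pref X) :
    Prop :=
  IsManip rule d Pd P'd ∧
    (Pd.lt (worstIn Pd (optionSet rule d Pd)) (worstIn Pd (optionSet rule d P'd)) ∨
     Pd.lt (bestIn Pd (optionSet rule d Pd)) (bestIn Pd (optionSet rule d P'd)))

/-- A rule is not obviously manipulable (NOM). -/
def NOM (rule : Profile D X → D → Finset X) : Prop :=
  ∀ (d : D) (Pd P'd : Pref X), ¬ IsObviousManip rule d Pd P'd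

/-- A rule is obviously manipulable (OM). -/
def OM (rule : Profile D X → D → Finset X) : Prop :=
  ∃ (d : D) (Pd P'd : Pref X), IsObviousManip rule d Pd P'd

/-- `Y` is a stable allocation at the profile `P` : it is an individually rational
allocation and admits no blocking contract. -/
def IsStable (M : Market D H X) (P : Profile D X) (Y : Finset X) : Prop :=
  IsAllocation M Y ∧ CD M P Y = Y ∧ CH M Y = Y ∧
    ∀ x : X, x ∉ Y →
      ¬ (x ∈ Cd M (P (M.xD x)) (M.xD x) (insert x Y) ∧
         x ∈ Ch M (M.xH x) (insert x Y))

/-- `⌈kq⌉` where `k` is the number of stable allocations at `P`. -/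
noncomputable def quantileIndex (M : Market D H X) (P : Profile D X) (q : ℝ) : ℕ :=
  ⌈(Set.ncard {Y : Finset X | IsStable M P Y} : ℝ) * q⌉₊

/-- `Z` is doctor `d`'s `⌈kq⌉`-th best outcome (according to `P d`) among the `k` stable
allocations at `P` : it is the outcome of some stable allocation, strictly fewer than
`⌈kq⌉` stable allocations give `d` a strictly better outcome, and at least `⌈kq⌉` stable
allocations give `d` a weakly better outcome. -/
def IsQuantileOutcome (M : Market D H X) (P : Profile D X) (q : ℝ) (d : D)
    (Z : Finset X) : Prop :=
  (∃ Y : Finset X, IsStable M P Y ∧ docPart M Y d = Z) ∧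
    Set.ncard {Y : Finset X | IsStable M P Y ∧ (P d).lt Z (docPart M Y d)} <
      quantileIndex M P q ∧
    quantileIndex M P q ≤
      Set.ncard {Y : Finset X | IsStable M P Y ∧ (P d).le Z (docPart M Y d)}

/-! ### Auxiliary machinery for the proof of Theorem 3 -/

section NOMAux

variable {M : Market D H X}

/-! #### Generic facts about a `Pref` -/

lemma pref_refl (pr : Pref X) (a : Finset X) : pr.le a a := pr.le_refl a

lemma pref_trans (pr : Pref X) {a b c : Finset X} (h1 : pr.le a b) (h2 : pr.le b c) :
    pr.le a c := pr.le_trans a b c h1 h2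

lemma pref_antisymm (pr : Pref X) {a b : Finset X} (h1 : pr.le a b) (h2 : pr.le b a) :
    a = b := pr.le_antisymm a b h1 h2

lemma pref_le_of_lt (pr : Pref X) {a b : Finset X} (h : pr.lt a b) : pr.le a b :=
  ((pr.lt_iff_le_not_ge a b).mp h).1

lemma pref_not_lt_of_le (pr : Pref X) {a b : Finset X} (h : pr.le a b) : ¬ pr.lt b a :=
  fun hl => ((pr.lt_iff_le_not_ge b a).mp hl).2 h

lemma pref_lt_of_not_le (pr : Pref X) {a b : Finset X} (h : ¬ pr.le a b) : pr.lt b a :=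
  (pr.lt_iff_le_not_ge b a).mpr ⟨(pr.le_total a b).resolve_left h, h⟩

/-! #### `allocs` and `bestAlloc` -/

lemma mem_allocs_iff {Y Z : Finset X} :
    Z ∈ allocs M Y ↔ Z ⊆ Y ∧ ∀ x ∈ Z, ∀ y ∈ Z, M.xD x = M.xD y → x = y := by
  simp [allocs, Finset.mem_filter, Finset.mem_powerset]

lemma bestAlloc_mem (pr : Pref X) (Y : Finset X) : bestAlloc M pr Y ∈ allocs M Y :=
  @Finset.max'_mem _ pr _ _

lemma le_bestAlloc (pr : Pref X) {Y Z : Finset X} (h : Z ∈ allocs M Y) :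
    pr.le Z (bestAlloc M pr Y) := @Finset.le_max' _ pr _ _ h

lemma empty_le_bestAlloc (pr : Pref X) (Y : Finset X) : pr.le ∅ (bestAlloc M pr Y) :=
  le_bestAlloc pr (empty_mem_allocs M Y)

lemma bestAlloc_le (pr : Pref X) {Y A : Finset X} (h : ∀ Z ∈ allocs M Y, pr.le Z A) :
    pr.le (bestAlloc M pr Y) A := @Finset.max'_le _ pr _ _ A h

lemma bestAlloc_subset (pr : Pref X) (Y : Finset X) : bestAlloc M pr Y ⊆ Y :=
  (mem_allocs_iff.mp (bestAlloc_mem pr Y)).1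

lemma bestAlloc_alloc (pr : Pref X) (Y : Finset X) :
    ∀ x ∈ bestAlloc M pr Y, ∀ y ∈ bestAlloc M pr Y, M.xD x = M.xD y → x = y :=
  (mem_allocs_iff.mp (bestAlloc_mem pr Y)).2

lemma bestAlloc_eq_of_mem (pr : Pref X) {Y A : Finset X} (hA : A ∈ allocs M Y)
    (hle : ∀ Z ∈ allocs M Y, pr.le Z A) : bestAlloc M pr Y = A :=
  pref_antisymm pr (bestAlloc_le pr hle) (le_bestAlloc pr hA)

/-! #### Parts and choice sets -/

lemma mem_docPart {Y : Finset X} {d : D} {x : X} :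
    x ∈ docPart M Y d ↔ x ∈ Y ∧ M.xD x = d := Finset.mem_filter

lemma mem_hospPart {Y : Finset X} {h : H} {x : X} :
    x ∈ hospPart M Y h ↔ x ∈ Y ∧ M.xH x = h := Finset.mem_filter

lemma docPart_insert {Y : Finset X} {d : D} {x : X} (hx : M.xD x = d) :
    docPart M (insert x Y) d = insert x (docPart M Y d) := by
  rw [docPart, Finset.filter_insert, if_pos hx]
  rfl

lemma hospPart_insert {Y : Finset X} {h : H} {x : X} (hx : M.xH x = h) :
    hospPart M (insert x Y) h = insert x (hospPart M Y h) := by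
  rw [hospPart, Finset.filter_insert, if_pos hx]
  rfl

lemma hospPart_mono {Y Y' : Finset X} (hYY : Y ⊆ Y') (h : H) :
    hospPart M Y h ⊆ hospPart M Y' h := Finset.filter_subset_filter _ hYY

lemma Ch_subset_hospPart (h : H) (Y : Finset X) : Ch M h Y ⊆ hospPart M Y h :=
  bestAlloc_subset _ _

lemma Ch_subset (h : H) (Y : Finset X) : Ch M h Y ⊆ Y :=
  (Ch_subset_hospPart h Y).trans (Finset.filter_subset _ _)

lemma Ch_hosp {h : H} {Y : Finset X} {x : X} (hx : x ∈ Ch M h Y) : M.xH x = h :=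
  (mem_hospPart.mp (Ch_subset_hospPart h Y hx)).2

lemma le_Ch (h : H) {Y Z : Finset X} (hZ : Z ∈ allocs M (hospPart M Y h)) :
    (M.prH h).le Z (Ch M h Y) := le_bestAlloc _ hZ

lemma Ch_le (h : H) {Y A : Finset X} (hle : ∀ Z ∈ allocs M (hospPart M Y h), (M.prH h).le Z A) :
    (M.prH h).le (Ch M h Y) A := bestAlloc_le _ hle

lemma Ch_alloc (h : H) (Y : Finset X) :
    ∀ a ∈ Ch M h Y, ∀ b ∈ Ch M h Y, M.xD a = M.xD b → a = b := bestAlloc_alloc _ _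

lemma empty_le_Ch (h : H) (Y : Finset X) : (M.prH h).le ∅ (Ch M h Y) :=
  empty_le_bestAlloc _ _

lemma Cd_subset_docPart (pr : Pref X) (d : D) (Y : Finset X) :
    Cd M pr d Y ⊆ docPart M Y d := bestAlloc_subset _ _

lemma Cd_doctor {pr : Pref X} {d : D} {Y : Finset X} {x : X} (hx : x ∈ Cd M pr d Y) :
    M.xD x = d := (mem_docPart.mp (Cd_subset_docPart pr d Y hx)).2

lemma le_Cd (pr : Pref X) (d : D) {Y Z : Finset X} (hZ : Z ∈ allocs M (docPart M Y d)) :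
    pr.le Z (Cd M pr d Y) := le_bestAlloc _ hZ

lemma Cd_le (pr : Pref X) (d : D) {Y A : Finset X}
    (hle : ∀ Z ∈ allocs M (docPart M Y d), pr.le Z A) : pr.le (Cd M pr d Y) A :=
  bestAlloc_le _ hle

lemma Cd_eq_of_mem (pr : Pref X) (d : D) {Y A : Finset X}
    (hA : A ∈ allocs M (docPart M Y d)) (hle : ∀ Z ∈ allocs M (docPart M Y d), pr.le Z A) :
    Cd M pr d Y = A := bestAlloc_eq_of_mem _ hA hle

lemma Cd_eq_singleton {pr : Pref X} {d : D} {Y : Finset X} {x : X}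
    (hx : x ∈ Cd M pr d Y) : Cd M pr d Y = {x} := by
  apply Finset.eq_singleton_iff_unique_mem.mpr
  refine ⟨hx, fun y hy => ?_⟩
  exact bestAlloc_alloc pr (docPart M Y d) y hy x hx (by rw [Cd_doctor hy, Cd_doctor hx])

lemma mem_CH_iff {Y : Finset X} {x : X} : x ∈ CH M Y ↔ x ∈ Ch M (M.xH x) Y := by
  simp only [CH, Finset.mem_biUnion, Finset.mem_univ, true_and]
  constructor
  · rintro ⟨h, hx⟩
    rwa [Ch_hosp hx]
  · intro hx
    exact ⟨_, hx⟩

lemma CH_subset (Y : Finset X) : CH M Y ⊆ Y := by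
  intro x hx
  exact Ch_subset _ _ (mem_CH_iff.mp hx)

lemma hospPart_CH (Y : Finset X) (h : H) : hospPart M (CH M Y) h = Ch M h Y := by
  ext x
  simp only [mem_hospPart, mem_CH_iff]
  constructor
  · rintro ⟨hx, hh⟩
    rwa [hh] at hx
  · intro hx
    exact ⟨by rwa [Ch_hosp hx], Ch_hosp hx⟩

lemma mem_CD_iff {P : Profile D X} {Y : Finset X} {x : X} :
    x ∈ CD M P Y ↔ x ∈ Cd M (P (M.xD x)) (M.xD x) Y := by
  simp only [CD, Finset.mem_biUnion, Finset.mem_univ, true_and]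
  constructor
  · rintro ⟨d, hx⟩
    have hd := Cd_doctor hx
    subst hd
    exact hx
  · intro hx
    exact ⟨_, hx⟩

lemma CD_subset (P : Profile D X) (Y : Finset X) : CD M P Y ⊆ Y := by
  intro x hx
  exact (mem_docPart.mp (Cd_subset_docPart _ _ _ (mem_CD_iff.mp hx))).1

lemma docPart_CD (P : Profile D X) (Y : Finset X) (d : D) :
    docPart M (CD M P Y) d = Cd M (P d) d Y := by
  ext x
  simp only [mem_docPart, mem_CD_iff]
  constructor
  · rintro ⟨hx, hd⟩
    rwa [hd] at hx
  · intro hx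
    exact ⟨by rwa [Cd_doctor hx], Cd_doctor hx⟩

lemma CD_alloc (P : Profile D X) (Y : Finset X) :
    ∀ a ∈ CD M P Y, ∀ b ∈ CD M P Y, M.xD a = M.xD b → a = b := by
  intro a ha b hb hab
  rw [mem_CD_iff] at ha hb
  rw [hab] at ha
  exact bestAlloc_alloc _ _ a ha b hb hab

lemma HDAoutput_alloc (P : Profile D X) :
    ∀ a ∈ HDAoutput M P, ∀ b ∈ HDAoutput M P, M.xD a = M.xD b → a = b :=
  fun a ha b hb hab => CD_alloc P _ a ha b hb hab

lemma hospOpt_eq (P : Profile D X) (d : D) :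
    hospOpt M P d = Cd M (P d) d (CH M (HDAsets M P (Fintype.card X))) :=
  docPart_CD _ _ _

lemma empty_le_hospOpt (P : Profile D X) (d : D) : (P d).le ∅ (hospOpt M P d) := by
  rw [hospOpt_eq]
  exact empty_le_bestAlloc _ _

/-! #### The H-DA process -/

lemma HDAsets_succ (P : Profile D X) (t : ℕ) :
    HDAsets M P (t + 1) =
      HDAsets M P t \ (CH M (HDAsets M P t) \ CD M P (CH M (HDAsets M P t))) := rfl

lemma HDAsets_succ_subset (P : Profile D X) (t : ℕ) :
    HDAsets M P (t + 1) ⊆ HDAsets M P t := by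
  rw [HDAsets_succ]
  exact Finset.sdiff_subset

lemma HDAsets_mono (P : Profile D X) {t t' : ℕ} (h : t ≤ t') :
    HDAsets M P t' ⊆ HDAsets M P t := by
  induction t', h using Nat.le_induction with
  | base => exact subset_rfl
  | succ k hk ih => exact (HDAsets_succ_subset P k).trans ih

lemma mem_HDAsets_succ {P : Profile D X} {t : ℕ} {x : X} :
    x ∈ HDAsets M P (t + 1) ↔
      x ∈ HDAsets M P t ∧
        (x ∈ CH M (HDAsets M P t) → x ∈ CD M P (CH M (HDAsets M P t))) := by
  rw [HDAsets_succ, Finset.mem_sdiff, Finset.mem_sdiff]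
  tauto

lemma HDAsets_fix {P : Profile D X} {t : ℕ}
    (h : HDAsets M P (t + 1) = HDAsets M P t) {k : ℕ} (hk : t ≤ k) :
    HDAsets M P k = HDAsets M P t := by
  induction k, hk using Nat.le_induction with
  | base => rfl
  | succ m hm ih => rw [HDAsets_succ, ih, ← HDAsets_succ, h]

lemma exists_HDAfix (P : Profile D X) :
    ∃ t ≤ Fintype.card X, HDAsets M P (t + 1) = HDAsets M P t := by
  by_contra hc
  push_neg at hc
  have key : ∀ t, t ≤ Fintype.card X + 1 → (HDAsets M P t).card + t ≤ Fintype.card X := by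
    intro t
    induction t with
    | zero =>
      intro _
      have : HDAsets M P 0 = (univ : Finset X) := rfl
      rw [this, Finset.card_univ]
      omega
    | succ k ih =>
      intro hk
      have hk' : k ≤ Fintype.card X := by omega
      have hne := hc k hk'
      have hss : HDAsets M P (k + 1) ⊂ HDAsets M P k :=
        Finset.ssubset_iff_subset_ne.mpr ⟨HDAsets_succ_subset P k, hne⟩
      have hcard := Finset.card_lt_card hss
      have := ih (by omega)
      omega
  have := key (Fintype.card X + 1) le_rfl
  omega

lemma HDAstop (P : Profile D X) :
    HDAsets M P (Fintype.card X + 1) = HDAsets M P (Fintype.card X) := by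
  obtain ⟨t, ht, hfix⟩ := exists_HDAfix (M := M) P
  have h1 := HDAsets_fix hfix ht
  have h2 := HDAsets_fix hfix (le_trans ht (Nat.le_succ _))
  rw [h1, h2]

lemma CH_final_subset_CD (P : Profile D X) :
    CH M (HDAsets M P (Fintype.card X)) ⊆
      CD M P (CH M (HDAsets M P (Fintype.card X))) := by
  intro x hx
  have hstop := HDAstop (M := M) P
  have hxS : x ∈ HDAsets M P (Fintype.card X) := CH_subset _ hx
  have hxS1 : x ∈ HDAsets M P (Fintype.card X + 1) := by rwa [hstop]
  exact (mem_HDAsets_succ.mp hxS1).2 hx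

lemma HDAoutput_eq_CH (P : Profile D X) :
    HDAoutput M P = CH M (HDAsets M P (Fintype.card X)) :=
  subset_antisymm (CD_subset _ _) (CH_final_subset_CD P)

/-! #### Monotonicity of a doctor's provisional outcome along H-DA -/

lemma hold_kept (hsub : ∀ h : H, Substitutable M h) {P : Profile D X} {e : D} {t : ℕ} {c : X}
    (hc : c ∈ Cd M (P e) e (CH M (HDAsets M P t))) :
    c ∈ Ch M (M.xH c) (HDAsets M P (t + 1)) := by
  have hCH : c ∈ CH M (HDAsets M P t) :=
    (mem_docPart.mp (Cd_subset_docPart _ _ _ hc)).1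
  have hChc : c ∈ Ch M (M.xH c) (HDAsets M P t) := mem_CH_iff.mp hCH
  have hCD : c ∈ CD M P (CH M (HDAsets M P t)) :=
    mem_CD_iff.mpr (by rw [Cd_doctor hc]; exact hc)
  have hS : c ∈ HDAsets M P (t + 1) :=
    mem_HDAsets_succ.mpr ⟨CH_subset _ hCH, fun _ => hCD⟩
  exact hsub (M.xH c) (HDAsets M P t) (HDAsets M P (t + 1))
    (hospPart_mono (HDAsets_succ_subset P t) _) c (mem_hospPart.mpr ⟨hS, rfl⟩) hChc

lemma hold_step (hsub : ∀ h : H, Substitutable M h) (P : Profile D X) (e : D) (t : ℕ) :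
    (P e).le (Cd M (P e) e (CH M (HDAsets M P t)))
      (Cd M (P e) e (CH M (HDAsets M P (t + 1)))) := by
  apply le_Cd
  rw [mem_allocs_iff]
  constructor
  · intro c hc
    exact mem_docPart.mpr ⟨mem_CH_iff.mpr (hold_kept hsub hc), Cd_doctor hc⟩
  · exact fun a ha b hb hab => bestAlloc_alloc _ _ a ha b hb hab

lemma hold_mono (hsub : ∀ h : H, Substitutable M h) (P : Profile D X) (e : D) {t t' : ℕ}
    (h : t ≤ t') :
    (P e).le (Cd M (P e) e (CH M (HDAsets M P t)))
      (Cd M (P e) e (CH M (HDAsets M P t'))) := by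
  induction t', h using Nat.le_induction with
  | base => exact pref_refl _ _
  | succ k hk ih => exact pref_trans _ ih (hold_step hsub P e k)

lemma removed_outcome_ge (hsub : ∀ h : H, Substitutable M h) {P : Profile D X} {x : X}
    (hxZ : x ∉ HDAsets M P (Fintype.card X)) :
    (P (M.xD x)).le {x}
      (Cd M (P (M.xD x)) (M.xD x) (CH M (HDAsets M P (Fintype.card X)))) := by
  have hex : ∃ t, x ∈ HDAsets M P t ∧ x ∉ HDAsets M P (t + 1) := by
    by_contra hcon
    push_neg at hcon
    have hall : ∀ t, x ∈ HDAsets M P t := by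
      intro t
      induction t with
      | zero => exact mem_univ x
      | succ k ih => exact hcon k ih
    exact hxZ (hall _)
  obtain ⟨t, hxt, hxt1⟩ := hex
  have htn : t ≤ Fintype.card X := by
    by_contra hgt
    push_neg at hgt
    exact hxZ (HDAsets_mono P hgt.le hxt)
  have hxCH : x ∈ CH M (HDAsets M P t) := by
    by_contra hno
    exact hxt1 (mem_HDAsets_succ.mpr ⟨hxt, fun hc => absurd hc hno⟩)
  have h1 : (P (M.xD x)).le {x} (Cd M (P (M.xD x)) (M.xD x) (CH M (HDAsets M P t))) := by
    apply le_Cd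
    rw [mem_allocs_iff]
    exact ⟨Finset.singleton_subset_iff.mpr (mem_docPart.mpr ⟨hxCH, rfl⟩), by simp⟩
  exact pref_trans _ h1 (hold_mono hsub P (M.xD x) htn)

/-! #### No blocking contract for the H-DA output -/

lemma noBlock (hsub : ∀ h : H, Substitutable M h) {P : Profile D X} {x : X}
    (hx : x ∉ HDAoutput M P)
    (hCh : x ∈ Ch M (M.xH x) (insert x (HDAoutput M P)))
    (hCd : x ∈ Cd M (P (M.xD x)) (M.xD x) (insert x (HDAoutput M P))) : False := by
  by_cases hxZ : x ∈ HDAsets M P (Fintype.card X)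
  · -- `x` was never rejected : hospital-side contradiction
    have hout : HDAoutput M P = CH M (HDAsets M P (Fintype.card X)) := HDAoutput_eq_CH P
    have hνh : hospPart M (HDAoutput M P) (M.xH x) =
        Ch M (M.xH x) (HDAsets M P (Fintype.card X)) := by
      rw [hout, hospPart_CH]
    have hB2 : (M.prH (M.xH x)).le (Ch M (M.xH x) (insert x (HDAoutput M P)))
        (Ch M (M.xH x) (HDAsets M P (Fintype.card X))) := by
      apply le_Ch
      rw [mem_allocs_iff]
      refine ⟨(Ch_subset_hospPart _ _).trans ?_, Ch_alloc _ _⟩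
      rw [hospPart_insert rfl, hνh]
      intro z hz
      rcases Finset.mem_insert.mp hz with rfl | hzc
      · exact mem_hospPart.mpr ⟨hxZ, rfl⟩
      · exact Ch_subset_hospPart _ _ hzc
    have hB1 : (M.prH (M.xH x)).le (Ch M (M.xH x) (HDAsets M P (Fintype.card X)))
        (Ch M (M.xH x) (insert x (HDAoutput M P))) := by
      apply le_Ch
      rw [mem_allocs_iff]
      refine ⟨?_, Ch_alloc _ _⟩
      rw [hospPart_insert rfl, hνh]
      exact Finset.subset_insert _ _
    have heq : Ch M (M.xH x) (insert x (HDAoutput M P)) =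
        Ch M (M.xH x) (HDAsets M P (Fintype.card X)) := pref_antisymm _ hB2 hB1
    rw [heq] at hCh
    exact hx (hout ▸ mem_CH_iff.mpr hCh)
  · -- `x` was rejected : doctor-side contradiction
    have hge := removed_outcome_ge (P := P) hsub hxZ
    have h3 : Cd M (P (M.xD x)) (M.xD x) (CH M (HDAsets M P (Fintype.card X))) =
        docPart M (HDAoutput M P) (M.xD x) := (docPart_CD _ _ _).symm
    rw [h3] at hge
    have hK : Cd M (P (M.xD x)) (M.xD x) (insert x (HDAoutput M P)) = {x} :=
      Cd_eq_singleton hCd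
    have h4 : (P (M.xD x)).le (docPart M (HDAoutput M P) (M.xD x)) {x} := by
      rw [← hK]
      apply le_Cd
      rw [mem_allocs_iff]
      constructor
      · rw [docPart_insert rfl]
        exact Finset.subset_insert _ _
      · intro a ha b hb hab
        exact HDAoutput_alloc P a (mem_docPart.mp ha).1 b (mem_docPart.mp hb).1 hab
    have hfin : docPart M (HDAoutput M P) (M.xD x) = {x} := pref_antisymm _ h4 hge
    have : x ∈ docPart M (HDAoutput M P) (M.xD x) := by
      rw [hfin]; exact Finset.mem_singleton_self x
    exact hx (mem_docPart.mp this).1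

/-! #### The shape of any outcome of the hospital-optimal rule -/

lemma hospOpt_shape (hsub : ∀ h : H, Substitutable M h) (P : Profile D X) (d : D) :
    hospOpt M P d = ∅ ∨
      ∃ x : X, hospOpt M P d = {x} ∧ M.xD x = d ∧ x ∈ Ch M (M.xH x) {x} := by
  rcases Finset.eq_empty_or_nonempty (hospOpt M P d) with he | ⟨x, hx⟩
  · exact Or.inl he
  right
  have hxCd : x ∈ Cd M (P d) d (CH M (HDAsets M P (Fintype.card X))) := by
    rw [← hospOpt_eq]; exact hx
  have hxd : M.xD x = d := Cd_doctor hxCd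
  have hsingle : hospOpt M P d = {x} := by
    rw [hospOpt_eq]; exact Cd_eq_singleton hxCd
  have hxCH : x ∈ CH M (HDAsets M P (Fintype.card X)) :=
    (mem_docPart.mp (Cd_subset_docPart _ _ _ hxCd)).1
  have hxS : x ∈ HDAsets M P (Fintype.card X) := CH_subset _ hxCH
  have hxacc : x ∈ Ch M (M.xH x) {x} := by
    apply hsub (M.xH x) (HDAsets M P (Fintype.card X)) {x}
    · intro z hz
      have := mem_hospPart.mp hz
      rcases Finset.mem_singleton.mp this.1 with rfl
      exact mem_hospPart.mpr ⟨hxS, this.2⟩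
    · exact mem_hospPart.mpr ⟨Finset.mem_singleton_self x, rfl⟩
    · exact mem_CH_iff.mp hxCH
  exact ⟨x, hsingle, hxd, hxacc⟩

/-! #### Preferences with a prescribed top -/

/-- A linear order on `Finset X` whose maximum is `A` and whose second-best element is `B`
(when `B ≠ A`); all other sets are ranked below `B`. -/
noncomputable def prefTop2 (A B : Finset X) : Pref X :=
  LinearOrder.lift'
    (fun S : Finset X =>
      toLex ((if S = A then 2 else if S = B then 1 else 0 : ℕ),
        (Fintype.equivFin (Finset X)) S))
    (fun S T hST => by
      have h2 : (Fintype.equivFin (Finset X)) S = (Fintype.equivFin (Finset X)) T :=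
        congrArg (fun p => (ofLex p).2) hST
      exact (Fintype.equivFin (Finset X)).injective h2)

lemma prefTop2_le_top (A B S : Finset X) : (prefTop2 A B).le S A := by
  show toLex ((if S = A then 2 else if S = B then 1 else 0 : ℕ),
      (Fintype.equivFin (Finset X)) S) ≤
    toLex ((if A = A then 2 else if A = B then 1 else 0 : ℕ),
      (Fintype.equivFin (Finset X)) A)
  rw [Prod.Lex.le_iff]
  by_cases hS : S = A
  · subst hS
    exact Or.inr ⟨rfl, le_rfl⟩
  · left
    have h2 : (if A = A then 2 else if A = B then 1 else 0 : ℕ) = 2 := if_pos rfl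
    rw [h2, if_neg hS]
    split <;> simp only [ofLex_toLex] <;> omega

lemma prefTop2_le_snd (A B S : Finset X) (hS : S ≠ A) : (prefTop2 A B).le S B := by
  by_cases hBA : B = A
  · subst hBA; exact prefTop2_le_top B B S
  by_cases hSB : S = B
  · subst hSB; exact pref_refl _ _
  show toLex ((if S = A then 2 else if S = B then 1 else 0 : ℕ),
      (Fintype.equivFin (Finset X)) S) ≤
    toLex ((if B = A then 2 else if B = B then 1 else 0 : ℕ),
      (Fintype.equivFin (Finset X)) B)
  rw [Prod.Lex.le_iff]
  left
  have h2 : (if B = A then 2 else if B = B then 1 else 0 : ℕ) = 1 := by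
    rw [if_neg hBA, if_pos rfl]
  rw [h2, if_neg hS, if_neg hSB]
  simp only [ofLex_toLex] <;> omega

lemma Cd_prefTop2 {A : Finset X} (B : Finset X) {e : D} {W : Finset X}
    (hA : A ∈ allocs M (docPart M W e)) : Cd M (prefTop2 A B) e W = A :=
  Cd_eq_of_mem _ _ hA (fun Z _ => prefTop2_le_top A B Z)

lemma Cd_prefTop2_empty (B : Finset X) (e : D) (W : Finset X) :
    Cd M (prefTop2 ∅ B) e W = ∅ := Cd_prefTop2 B (empty_mem_allocs M _)

/-! #### `worstIn` and `bestIn` -/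

lemma worstIn_le (pr : Pref X) {S : Set (Finset X)} {s : Finset X} (hs : s ∈ S) :
    pr.le (worstIn pr S) s := by
  rw [worstIn, dif_pos ⟨s, hs⟩]
  exact @Finset.min'_le _ pr _ s ((Set.Finite.mem_toFinset _).mpr hs)

lemma worstIn_mem (pr : Pref X) {S : Set (Finset X)} (hS : S.Nonempty) : worstIn pr S ∈ S := by
  rw [worstIn, dif_pos hS]
  exact (Set.Finite.mem_toFinset _).mp (@Finset.min'_mem _ pr _ _)

lemma le_bestIn (pr : Pref X) {S : Set (Finset X)} {s : Finset X} (hs : s ∈ S) :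
    pr.le s (bestIn pr S) := by
  rw [bestIn, dif_pos ⟨s, hs⟩]
  exact @Finset.le_max' _ pr _ s ((Set.Finite.mem_toFinset _).mpr hs)

lemma bestIn_mem (pr : Pref X) {S : Set (Finset X)} (hS : S.Nonempty) : bestIn pr S ∈ S := by
  rw [bestIn, dif_pos hS]
  exact (Set.Finite.mem_toFinset _).mp (@Finset.max'_mem _ pr _ _)

/-! #### The best-case profile : all other doctors reject everything -/

lemma bestCase (hone : ∀ x y : X, M.xD x = M.xD y → M.xH x = M.xH y → x = y)
    (hsub : ∀ h : H, Substitutable M h) (d : D) (Pd : Pref X) (x : X)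
    (hxd : M.xD x = d) (hacc : x ∈ Ch M (M.xH x) {x}) :
    Pd.le {x} (hospOpt M (fun e => if e = d then Pd else prefTop2 ∅ ∅) d) := by
  set P : Profile D X := fun e => if e = d then Pd else prefTop2 ∅ ∅ with hPdef
  have hPd : P d = Pd := if_pos rfl
  rw [← hPd]
  by_cases hxZ : x ∈ HDAsets M P (Fintype.card X)
  · -- `x` survives to the end; it must be held by `d`
    have hChne : (Ch M (M.xH x) (HDAsets M P (Fintype.card X))).Nonempty := by
      rw [Finset.nonempty_iff_ne_empty]
      intro hne
      have h1 : (M.prH (M.xH x)).le {x} (Ch M (M.xH x) (HDAsets M P (Fintype.card X))) := by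
        apply le_Ch
        rw [mem_allocs_iff]
        exact ⟨Finset.singleton_subset_iff.mpr (mem_hospPart.mpr ⟨hxZ, rfl⟩), by simp⟩
      have haccs : Ch M (M.xH x) {x} = {x} := by
        apply subset_antisymm ((Ch_subset_hospPart _ _).trans (Finset.filter_subset _ _))
        exact Finset.singleton_subset_iff.mpr hacc
      have h0 : (M.prH (M.xH x)).le ∅ ({x} : Finset X) := by
        rw [← haccs]; exact empty_le_Ch _ _
      rw [hne] at h1
      exact Finset.singleton_ne_empty x (pref_antisymm _ h1 h0)
    obtain ⟨c, hc⟩ := hChne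
    have hcCH : c ∈ CH M (HDAsets M P (Fintype.card X)) :=
      mem_CH_iff.mpr (by rwa [Ch_hosp hc])
    have hcCd := mem_CD_iff.mp (CH_final_subset_CD P hcCH)
    have hcd : M.xD c = d := by
      by_contra hne
      have hPe : P (M.xD c) = prefTop2 ∅ ∅ := if_neg hne
      rw [hPe, Cd_prefTop2_empty] at hcCd
      exact absurd hcCd (Finset.notMem_empty c)
    have hcx : c = x := hone c x (by rw [hcd, hxd]) (Ch_hosp hc)
    subst hcx
    rw [hcd] at hcCd
    have hout : hospOpt M P d = {c} := by
      rw [hospOpt_eq]; exact Cd_eq_singleton hcCd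
    rw [hout]
    exact pref_refl _ _
  · have h := removed_outcome_ge (P := P) hsub hxZ
    rw [hxd] at h
    rw [hospOpt_eq]
    exact h

/-! #### The worst-case profile : all other doctors lock in their `ν`-contracts -/

lemma worstCase (hone : ∀ x y : X, M.xD x = M.xD y → M.xH x = M.xH y → x = y)
    (hsub : ∀ h : H, Substitutable M h) (Pstar : Profile D X) (Q : Pref X) (d : D) :
    (Pstar d).le
      (hospOpt M (fun e => if e = d then Q
        else prefTop2 (docPart M (HDAoutput M Pstar) e) ∅) d)
      (hospOpt M Pstar d) := by
  set P' : Profile D X :=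
    fun e => if e = d then Q else prefTop2 (docPart M (HDAoutput M Pstar) e) ∅ with hP'
  by_contra hle
  have hlt : (Pstar d).lt (hospOpt M Pstar d) (hospOpt M P' d) := pref_lt_of_not_le _ hle
  have hw0 : (Pstar d).le ∅ (hospOpt M Pstar d) := empty_le_hospOpt Pstar d
  rcases hospOpt_shape hsub P' d with hμ | ⟨x, hμ, hxd, -⟩
  · rw [hμ] at hlt
    exact pref_not_lt_of_le _ hw0 hlt
  rw [hμ] at hlt
  have hwd : hospOpt M Pstar d = docPart M (HDAoutput M Pstar) d := rfl
  have hwCd : hospOpt M Pstar d =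
      Cd M (Pstar d) d (CH M (HDAsets M Pstar (Fintype.card X))) := docPart_CD _ _ _
  -- `x` is not part of the truthful outcome
  have hxν : x ∉ HDAoutput M Pstar := by
    intro hmem
    have hxw : x ∈ hospOpt M Pstar d := by
      rw [hwd]; exact mem_docPart.mpr ⟨hmem, hxd⟩
    have hsing : hospOpt M Pstar d = {x} := by
      rw [hwCd] at hxw ⊢
      exact Cd_eq_singleton hxw
    rw [hsing] at hlt
    exact pref_not_lt_of_le _ (pref_refl (Pstar d) {x}) hlt
  -- the other doctors' ν-contracts survive the whole P'-run
  have hsurv : ∀ t, ∀ z ∈ HDAoutput M Pstar, M.xD z ≠ d → z ∈ HDAsets M P' t := by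
    intro t
    induction t with
    | zero => exact fun z _ _ => mem_univ z
    | succ k ih =>
      intro z hz hzd
      apply mem_HDAsets_succ.mpr
      refine ⟨ih z hz hzd, fun hzCH => ?_⟩
      apply mem_CD_iff.mpr
      have hPe : P' (M.xD z) = prefTop2 (docPart M (HDAoutput M Pstar) (M.xD z)) ∅ :=
        if_neg hzd
      rw [hPe]
      have hA : docPart M (HDAoutput M Pstar) (M.xD z) ∈
          allocs M (docPart M (CH M (HDAsets M P' k)) (M.xD z)) := by
        rw [mem_allocs_iff]
        constructor
        · intro y hy
          obtain ⟨hy1, hy2⟩ := mem_docPart.mp hy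
          have hyz : y = z := HDAoutput_alloc Pstar y hy1 z hz (by rw [hy2])
          subst hyz
          exact mem_docPart.mpr ⟨hzCH, hy2⟩
        · intro a ha b hb hab
          exact HDAoutput_alloc Pstar a (mem_docPart.mp ha).1 b (mem_docPart.mp hb).1 hab
      rw [Cd_prefTop2 ∅ hA]
      exact mem_docPart.mpr ⟨hz, rfl⟩
  -- `x` is among the final offers of the P'-run
  have hxout : x ∈ HDAoutput M P' := by
    have hxin : x ∈ hospOpt M P' d := by rw [hμ]; exact Finset.mem_singleton_self x
    exact (mem_docPart.mp hxin).1
  have hxCHY : x ∈ CH M (HDAsets M P' (Fintype.card X)) := CD_subset P' _ hxout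
  have hxChY : x ∈ Ch M (M.xH x) (HDAsets M P' (Fintype.card X)) := mem_CH_iff.mp hxCHY
  have hxY : x ∈ HDAsets M P' (Fintype.card X) := CH_subset _ hxCHY
  -- the hospital of `x` accepts `x` on top of ν
  have hxCh : x ∈ Ch M (M.xH x) (insert x (HDAoutput M Pstar)) := by
    apply hsub (M.xH x) (HDAsets M P' (Fintype.card X)) _ ?_ x
      (mem_hospPart.mpr ⟨Finset.mem_insert_self _ _, rfl⟩) hxChY
    intro z hz
    obtain ⟨hz1, hz2⟩ := mem_hospPart.mp hz
    rcases Finset.mem_insert.mp hz1 with rfl | hzν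
    · exact mem_hospPart.mpr ⟨hxY, hz2⟩
    · by_cases hzd : M.xD z = d
      · have hzx : z = x := hone z x (by rw [hzd, hxd]) (by rw [hz2])
        subst hzx
        exact mem_hospPart.mpr ⟨hxY, hz2⟩
      · exact mem_hospPart.mpr ⟨hsurv (Fintype.card X) z hzν hzd, hz2⟩
  -- doctor `d` blocks with `x`
  have hxCdB : x ∈ Cd M (Pstar (M.xD x)) (M.xD x) (insert x (HDAoutput M Pstar)) := by
    rw [hxd]
    have hKd : Cd M (Pstar d) d (insert x (HDAoutput M Pstar)) = {x} := by
      apply Cd_eq_of_mem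
      · rw [mem_allocs_iff]
        exact ⟨Finset.singleton_subset_iff.mpr
          (mem_docPart.mpr ⟨Finset.mem_insert_self _ _, hxd⟩), by simp⟩
      · intro Z hZ
        rw [mem_allocs_iff, docPart_insert hxd] at hZ
        obtain ⟨hZsub, hZalloc⟩ := hZ
        rcases Finset.eq_empty_or_nonempty Z with rfl | ⟨y, hy⟩
        · exact pref_trans _ hw0 (pref_le_of_lt _ hlt)
        · have hyd : ∀ b ∈ Z, M.xD b = d := by
            intro b hb
            rcases Finset.mem_insert.mp (hZsub hb) with rfl | hbw
            · exact hxd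
            · exact (mem_docPart.mp hbw).2
          have hZy : Z = {y} := Finset.eq_singleton_iff_unique_mem.mpr
            ⟨hy, fun b hb => hZalloc b hb y hy (by rw [hyd b hb, hyd y hy])⟩
          rcases Finset.mem_insert.mp (hZsub hy) with rfl | hyw
          · rw [hZy]; exact pref_refl _ _
          · have hyw' : y ∈ hospOpt M Pstar d := by rw [hwd]; exact hyw
            have hwy : hospOpt M Pstar d = {y} := by
              rw [hwCd] at hyw' ⊢
              exact Cd_eq_singleton hyw'
            rw [hZy, ← hwy]
            exact pref_le_of_lt _ hlt
    rw [hKd]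
    exact Finset.mem_singleton_self x
  exact noBlock hsub hxν hxCh hxCdB

end NOMAux

/-- Theorem 3: in the matching model without contracts (at most one contract per
doctor-hospital pair), if every hospital's preference is substitutable then the
hospital-optimal rule is not obviously manipulable. -/
theorem hospOpt_NOM (M : Market D H X)
    (hone : ∀ x y : X, M.xD x = M.xD y → M.xH x = M.xH y → x = y)
    (hsub : ∀ h : H, Substitutable M h) :
    NOM (hospOpt M) := by
  rintro d Pd P'd ⟨-, hobv⟩
  have hne : ∀ Q : Pref X, (optionSet (hospOpt M) d Q).Nonempty := by
    intro Q
    exact ⟨hospOpt M (fun _ => Q) d, (fun _ => Q), rfl, rfl⟩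
  rcases hobv with hworst | hbest
  · -- the worst case can never strictly improve
    obtain ⟨Pstar, hPstar, hwdef⟩ := worstIn_mem Pd (hne Pd)
    have hμmem : hospOpt M (fun e => if e = d then P'd
        else prefTop2 (docPart M (HDAoutput M Pstar) e) ∅) d ∈
        optionSet (hospOpt M) d P'd :=
      ⟨_, if_pos rfl, rfl⟩
    have h1 : Pd.le (worstIn Pd (optionSet (hospOpt M) d P'd))
        (hospOpt M (fun e => if e = d then P'd
          else prefTop2 (docPart M (HDAoutput M Pstar) e) ∅) d) :=
      worstIn_le Pd hμmem
    have h2 := worstCase hone hsub Pstar P'd d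
    rw [hPstar] at h2
    rw [hwdef] at hworst
    exact pref_not_lt_of_le Pd (pref_trans Pd h1 h2) hworst
  · -- the best case can never strictly improve
    obtain ⟨Pb, hPb, hbdef⟩ := bestIn_mem Pd (hne P'd)
    have hgmem : hospOpt M (fun e => if e = d then Pd else prefTop2 ∅ ∅) d ∈
        optionSet (hospOpt M) d Pd :=
      ⟨_, if_pos rfl, rfl⟩
    have h1 : Pd.le (hospOpt M (fun e => if e = d then Pd else prefTop2 ∅ ∅) d)
        (bestIn Pd (optionSet (hospOpt M) d Pd)) := le_bestIn Pd hgmem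
    rcases hospOpt_shape hsub Pb d with he | ⟨x, hx, hxd, hxacc⟩
    · rw [hbdef, he] at hbest
      have h0 : Pd.le ∅ (hospOpt M (fun e => if e = d then Pd else prefTop2 ∅ ∅) d) := by
        have h0' := empty_le_hospOpt (M := M)
          (fun e => if e = d then Pd else prefTop2 ∅ ∅) d
        rwa [if_pos rfl] at h0'
      exact pref_not_lt_of_le Pd (pref_trans Pd h0 h1) hbest
    · have hbx := bestCase hone hsub d Pd x hxd hxacc
      rw [hbdef, hx] at hbest
      exact pref_not_lt_of_le Pd (pref_trans Pd hbx h1) hbest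

end Matching
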